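/- The matrices G₂ and G₃ (of the 5-point Gromov product structures S₂ and S₃) are isospectral (same characteristic polynomial t³(t-2)(t+2)) but not similar, since their minimal polynomials differ (t²(t-2)(t+2) versus t(t-2)(t+2)). -/

import Mathlib

open Polynomial Matrix

private noncomputable abbrev M2 : Matrix (Fin 5) (Fin 5) ℝ :=
  !![0,1,0,0,1; 1,0,1,0,0; 0,1,0,0,1; 0,1,0,0,1; 1,0,0,1,0]
private noncomputable abbrev M3 : Matrix (Fin 5) (Fin 5) ℝ :=
  !![0,1,0,1,0; 1,0,1,0,0; 0,1,0,1,0; 1,0,1,0,0; 1,0,1,0,0]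
private noncomputable abbrev A2 : Matrix (Fin 5) (Fin 5) ℝ :=
  !![2,0,1,1,0; 0,2,0,0,2; 2,0,1,1,0; 2,0,1,1,0; 0,2,0,0,2]
private noncomputable abbrev B2 : Matrix (Fin 5) (Fin 5) ℝ :=
  !![0,4,0,0,4; 4,0,2,2,0; 0,4,0,0,4; 0,4,0,0,4; 4,0,2,2,0]
private noncomputable abbrev A3 : Matrix (Fin 5) (Fin 5) ℝ :=
  !![2,0,2,0,0; 0,2,0,2,0; 2,0,2,0,0; 0,2,0,2,0; 0,2,0,2,0]

private lemma hA2 : M2 * M2 = A2 := by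
  funext i j
  fin_cases i <;> fin_cases j <;> norm_num [Matrix.mul_apply, Fin.sum_univ_succ]

private lemma hB2 : A2 * M2 = B2 := by
  funext i j
  fin_cases i <;> fin_cases j <;> norm_num [Matrix.mul_apply, Fin.sum_univ_succ]

private lemma hAA2 : A2 * A2 = (4:ℝ) • A2 := by
  funext i j
  fin_cases i <;> fin_cases j <;> norm_num [Matrix.mul_apply, Fin.sum_univ_succ]

private lemma hA3 : M3 * M3 = A3 := by
  funext i j
  fin_cases i <;> fin_cases j <;> norm_num [Matrix.mul_apply, Fin.sum_univ_succ]

private lemma hB3 : A3 * M3 = (4:ℝ) • M3 := by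
  funext i j
  fin_cases i <;> fin_cases j <;> norm_num [Matrix.mul_apply, Fin.sum_univ_succ]

private lemma M2sq : M2 ^ 2 = A2 := by rw [sq, hA2]
private lemma M2cube : M2 ^ 3 = B2 := by rw [pow_succ, M2sq, hB2]
private lemma M2four : M2 ^ 4 = (4:ℝ) • A2 := by
  rw [show (4:ℕ) = 2 + 2 from rfl, pow_add, M2sq, hAA2]
private lemma M3sq : M3 ^ 2 = A3 := by rw [sq, hA3]
private lemma M3cube : M3 ^ 3 = (4:ℝ) • M3 := by rw [pow_succ, M3sq, hB3]

private lemma helper {m p : ℝ[X]} (hm : m.Monic) (hp : p.Monic) (hdvd : m ∣ p)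
    (hdeg : p.natDegree ≤ m.natDegree) : m = p := by
  obtain ⟨k, hk⟩ := hdvd
  have hk' : k.Monic := hm.of_mul_monic_left (hk ▸ hp)
  have h1 : p.natDegree = m.natDegree + k.natDegree := by
    rw [hk, hm.natDegree_mul hk']
  have h0 : k.natDegree = 0 := by omega
  have : k = 1 := hk'.natDegree_eq_zero.mp h0
  rw [hk, this, mul_one]

set_option maxHeartbeats 4000000 in
private lemma charG2 : M2.charpoly = X ^ 3 * (X - C 2) * (X + C 2) := by
  rw [Matrix.charpoly]
  have hc : charmatrix M2
      = !![X, -1, 0, 0, -1; -1, X, -1, 0, 0; 0, -1, X, 0, -1; 0, -1, 0, X, -1; -1, 0, 0, -1, X] := by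
    funext i j
    fin_cases i <;> fin_cases j <;>
      simp [charmatrix_apply_eq, charmatrix_apply_ne, vecHead, vecTail]
  rw [hc]
  have e1 : ∀ (h : ((3:Fin 4):ℕ) < 5) (a b c d e : ℝ[X]), ![a,b,c,d,e] ⟨((3:Fin 4):ℕ), h⟩ = d :=
    fun _ _ _ _ _ _ => rfl
  simp [Matrix.det_succ_row_zero, Fin.sum_univ_succ, Fin.succAbove]
  rw [show (Polynomial.C (2:ℝ)) = 2 from map_ofNat C 2]; ring

set_option maxHeartbeats 4000000 in
private lemma charG3 : M3.charpoly = X ^ 3 * (X - C 2) * (X + C 2) := by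
  rw [Matrix.charpoly]
  have hc : charmatrix M3
      = !![X, -1, 0, -1, 0; -1, X, -1, 0, 0; 0, -1, X, -1, 0; -1, 0, -1, X, 0; -1, 0, -1, 0, X] := by
    funext i j
    fin_cases i <;> fin_cases j <;>
      simp [charmatrix_apply_eq, charmatrix_apply_ne, vecHead, vecTail]
  rw [hc]
  have e1 : ∀ (h : ((3:Fin 4):ℕ) < 5) (a b c d e : ℝ[X]), ![a,b,c,d,e] ⟨((3:Fin 4):ℕ), h⟩ = d :=
    fun _ _ _ _ _ _ => rfl
  simp [Matrix.det_succ_row_zero, Fin.sum_univ_succ, Fin.succAbove]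
  rw [show (Polynomial.C (2:ℝ)) = 2 from map_ofNat C 2]; ring

private lemma hp4 : (X ^ 2 * (X - C 2) * (X + C 2) : ℝ[X]) = X ^ 4 - C 4 * X ^ 2 := by
  rw [show (Polynomial.C (4:ℝ)) = 4 from map_ofNat C 4,
      show (Polynomial.C (2:ℝ)) = 2 from map_ofNat C 2]
  ring

private lemma hp3 : (X * (X - C 2) * (X + C 2) : ℝ[X]) = X ^ 3 - C 4 * X := by
  rw [show (Polynomial.C (4:ℝ)) = 4 from map_ofNat C 4,
      show (Polynomial.C (2:ℝ)) = 2 from map_ofNat C 2]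
  ring

private lemma hmon4 : (X ^ 2 * (X - C 2) * (X + C 2) : ℝ[X]).Monic :=
  (((monic_X_pow 2).mul (monic_X_sub_C 2)).mul (monic_X_add_C 2))

private lemma hmon3 : (X * (X - C 2) * (X + C 2) : ℝ[X]).Monic :=
  ((monic_X.mul (monic_X_sub_C 2)).mul (monic_X_add_C 2))

private lemma hdeg4 : (X ^ 2 * (X - C 2) * (X + C 2) : ℝ[X]).natDegree = 4 := by
  compute_degree!

private lemma hdeg3 : (X * (X - C 2) * (X + C 2) : ℝ[X]).natDegree = 3 := by
  compute_degree!

private lemma ann2 : aeval M2 (X ^ 2 * (X - C 2) * (X + C 2) : ℝ[X]) = 0 := by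
  rw [hp4, map_sub, _root_.map_mul, aeval_X_pow, aeval_X_pow, aeval_C, M2four, M2sq,
    ← Algebra.smul_def]
  norm_num

private lemma ann3 : aeval M3 (X * (X - C 2) * (X + C 2) : ℝ[X]) = 0 := by
  rw [hp3, map_sub, _root_.map_mul, aeval_X_pow, aeval_X, aeval_C, M3cube, ← Algebra.smul_def]
  norm_num

private lemma minG2 : minpoly ℝ M2 = X ^ 2 * (X - C 2) * (X + C 2) := by
  have hint : IsIntegral ℝ M2 := ⟨_, M2.charpoly_monic, M2.aeval_self_charpoly⟩
  have hmon := minpoly.monic hint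
  have hdvd := minpoly.dvd ℝ M2 ann2
  refine helper hmon hmon4 hdvd ?_
  rw [hdeg4]
  by_contra hlt
  push_neg at hlt
  have hd3 : (minpoly ℝ M2).natDegree ≤ 3 := by omega
  set q : ℝ[X] := X ^ (3 - (minpoly ℝ M2).natDegree) * minpoly ℝ M2 with hq
  have hqmon : q.Monic := (monic_X_pow _).mul hmon
  have hq3 : q.natDegree = 3 := by
    rw [hq, natDegree_mul (pow_ne_zero _ X_ne_zero) hmon.ne_zero, natDegree_X_pow]
    omega
  have hqann : aeval M2 q = 0 := by rw [hq, _root_.map_mul, minpoly.aeval, mul_zero]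
  have hsum : (0 : Matrix (Fin 5) (Fin 5) ℝ) = ∑ i ∈ Finset.range (3 + 1), q.coeff i • M2 ^ i := by
    rw [← hqann, Polynomial.aeval_eq_sum_range, hq3]
  rw [Finset.sum_range_succ, Finset.sum_range_succ, Finset.sum_range_succ,
    Finset.sum_range_one] at hsum
  have hc3 : q.coeff 3 = 1 := by rw [← hq3]; exact hqmon.coeff_natDegree
  rw [hc3, one_smul, pow_zero, pow_one, M2sq, M2cube] at hsum
  have e1 := congrFun (congrFun hsum 0) 1
  have e2 := congrFun (congrFun hsum 1) 2
  simp [Matrix.add_apply, Matrix.smul_apply, Matrix.one_apply] at e1 e2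
  linarith

private lemma minG3 : minpoly ℝ M3 = X * (X - C 2) * (X + C 2) := by
  have hint : IsIntegral ℝ M3 := ⟨_, M3.charpoly_monic, M3.aeval_self_charpoly⟩
  have hmon := minpoly.monic hint
  have hdvd := minpoly.dvd ℝ M3 ann3
  refine helper hmon hmon3 hdvd ?_
  rw [hdeg3]
  by_contra hlt
  push_neg at hlt
  have hd2 : (minpoly ℝ M3).natDegree ≤ 2 := by omega
  set q : ℝ[X] := X ^ (2 - (minpoly ℝ M3).natDegree) * minpoly ℝ M3 with hq
  have hqmon : q.Monic := (monic_X_pow _).mul hmon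
  have hq2 : q.natDegree = 2 := by
    rw [hq, natDegree_mul (pow_ne_zero _ X_ne_zero) hmon.ne_zero, natDegree_X_pow]
    omega
  have hqann : aeval M3 q = 0 := by rw [hq, _root_.map_mul, minpoly.aeval, mul_zero]
  have hsum : (0 : Matrix (Fin 5) (Fin 5) ℝ) = ∑ i ∈ Finset.range (2 + 1), q.coeff i • M3 ^ i := by
    rw [← hqann, Polynomial.aeval_eq_sum_range, hq2]
  rw [Finset.sum_range_succ, Finset.sum_range_succ, Finset.sum_range_one] at hsum
  have hc2 : q.coeff 2 = 1 := by rw [← hq2]; exact hqmon.coeff_natDegree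
  rw [hc2, one_smul, pow_zero, pow_one, M3sq] at hsum
  have e1 := congrFun (congrFun hsum 0) 2
  simp [Matrix.add_apply, Matrix.smul_apply, Matrix.one_apply] at e1

private lemma notSim :
    ¬ ∃ P : (Matrix (Fin 5) (Fin 5) ℝ)ˣ,
      M2 = (P : Matrix (Fin 5) (Fin 5) ℝ) * M3 *
        ((P⁻¹ : (Matrix (Fin 5) (Fin 5) ℝ)ˣ) : Matrix (Fin 5) (Fin 5) ℝ) := by
  rintro ⟨P, hP⟩
  have h3 : M2 ^ 3 = (4:ℝ) • M2 := by
    rw [hP, Units.conj_pow, M3cube, Matrix.mul_smul, Matrix.smul_mul]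
  have hann : aeval M2 (X * (X - C 2) * (X + C 2) : ℝ[X]) = 0 := by
    rw [hp3, map_sub, _root_.map_mul, aeval_X_pow, aeval_X, aeval_C, h3, ← Algebra.smul_def]
    norm_num
  have hdvd := minpoly.dvd ℝ M2 hann
  have hne : (X * (X - C 2) * (X + C 2) : ℝ[X]) ≠ 0 := hmon3.ne_zero
  have hle := Polynomial.natDegree_le_of_dvd hdvd hne
  rw [minG2, hdeg4, hdeg3] at hle
  omega

theorem G2_G3_isospectral_not_similar :
    let G₂ : Matrix (Fin 5) (Fin 5) ℝ :=
      !![0,1,0,0,1; 1,0,1,0,0; 0,1,0,0,1; 0,1,0,0,1; 1,0,0,1,0]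
    let G₃ : Matrix (Fin 5) (Fin 5) ℝ :=
      !![0,1,0,1,0; 1,0,1,0,0; 0,1,0,1,0; 1,0,1,0,0; 1,0,1,0,0]
    G₂.charpoly = G₃.charpoly ∧ G₂.charpoly = X ^ 3 * (X - C 2) * (X + C 2) ∧
    minpoly ℝ G₂ = X ^ 2 * (X - C 2) * (X + C 2) ∧
    minpoly ℝ G₃ = X * (X - C 2) * (X + C 2) ∧
    ¬ ∃ P : (Matrix (Fin 5) (Fin 5) ℝ)ˣ, G₂ = (P : Matrix (Fin 5) (Fin 5) ℝ) * G₃ * ((P⁻¹ : (Matrix (Fin 5) (Fin 5) ℝ)ˣ) : Matrix (Fin 5) (Fin 5) ℝ) := by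
  intro G₂ G₃
  exact ⟨charG2.trans charG3.symm, charG2, minG2, minG3, notSim⟩
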